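/- Let ρ be a root of x^3 + (a-1)x^2 - ax - 1 with integer a ≥ 3 (Ennola's cubic). Then ρ and ρ - 1 are units in Z[ρ], and ρ(ρ-1)^{-1} = 1 + aρ + ρ^2 in Q(ρ). -/
import Mathlib


theorem ennola_units (a : ℤ) (ha : 3 ≤ a) (ρ : ℝ)
    (hρ : ρ^3 + (a-1)*ρ^2 - a*ρ - 1 = 0) :
    -- ρ is a unit in ℤ[ρ]
    (ρ * (ρ^2 + (a-1)*ρ - a) = 1) ∧
    -- ρ - 1 is a unit in ℤ[ρ]
    (∃ x y z : ℤ, (ρ - 1) * ((x:ℝ) + y*ρ + z*ρ^2) = 1) ∧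
    -- ρ(ρ-1)⁻¹ = 1 + aρ + ρ²
    (ρ * (ρ - 1)⁻¹ = 1 + a*ρ + ρ^2) := by
  have hne : ρ - 1 ≠ 0 := by
    intro h
    have h1 : ρ = 1 := by linarith
    rw [h1] at hρ
    norm_num at hρ
  refine ⟨by linear_combination hρ, ⟨0, a, 1, ?_⟩, ?_⟩
  · push_cast
    linear_combination hρ
  · field_simp
    linear_combination (-1 : ℝ) * hρ
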